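/- Let r be an integer and m, d positive integers with gcd(m,d) = 1, and let λ ∈ {0,…,d-1} satisfy r + λm ≡ 0 (mod d). Then for all natural numbers s and t with 0 ≤ t ≤ d-1, (q^r;q^m)_{sd+t} / (q^m;q^m)_{sd+t} ≡ [((r+λm)/(md))_s / (1)_s] · (q^r;q^m)_t / (q^m;q^m)_t modulo Φ_d(q), where (x)_s = x(x+1)⋯(x+s-1) is the rising Pochhammer symbol. -/

import Mathlib

open Polynomial Finset


open Polynomial Finset

noncomputable section

namespace QLucas

abbrev F : Type := RatFunc ℚ

def ι : Polynomial ℚ →+* F := algebraMap (Polynomial ℚ) (RatFunc ℚ)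

def Phi (d : ℕ) : Polynomial ℚ := cyclotomic d ℚ

def Good (d : ℕ) (x : F) : Prop := ∃ p q : Polynomial ℚ, ¬ Phi d ∣ q ∧ x * ι q = ι p

def Cong (d : ℕ) (x y : F) : Prop :=
  ∃ p q : Polynomial ℚ, ¬ Phi d ∣ q ∧ (x - y) * ι q = ι (Phi d * p)

variable {d : ℕ}

lemma not_dvd_one (hd : 0 < d) : ¬ Phi d ∣ (1 : Polynomial ℚ) := fun h =>
  (cyclotomic.irreducible_rat hd).not_isUnit (isUnit_of_dvd_one h)

lemma prime_phi (hd : 0 < d) : Prime (Phi d) :=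
  (cyclotomic.irreducible_rat hd).prime

lemma not_dvd_mul (hd : 0 < d) {a b : Polynomial ℚ} (ha : ¬ Phi d ∣ a) (hb : ¬ Phi d ∣ b) :
    ¬ Phi d ∣ a * b := fun h => ((prime_phi hd).2.2 a b h).elim ha hb

lemma cong_refl (hd : 0 < d) (x : F) : Cong d x x := ⟨0, 1, not_dvd_one hd, by simp⟩

lemma cong_of_eq (hd : 0 < d) {x y : F} (h : x = y) : Cong d x y := h ▸ cong_refl hd x

lemma Cong.symm' {x y : F} (h : Cong d x y) : Cong d y x := by
  obtain ⟨p, q, hq, h⟩ := h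
  exact ⟨-p, q, hq, by simp only [map_mul, map_neg] at h ⊢; linear_combination -h⟩

lemma Cong.trans' (hd : 0 < d) {x y z : F} (h1 : Cong d x y) (h2 : Cong d y z) :
    Cong d x z := by
  obtain ⟨p1, q1, hq1, h1⟩ := h1
  obtain ⟨p2, q2, hq2, h2⟩ := h2
  exact ⟨p1 * q2 + p2 * q1, q1 * q2, not_dvd_mul hd hq1 hq2, by
    simp only [map_mul, map_add] at h1 h2 ⊢
    linear_combination ι q2 * h1 + ι q1 * h2⟩

lemma good_iota (hd : 0 < d) (p : Polynomial ℚ) : Good d (ι p) :=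
  ⟨p, 1, not_dvd_one hd, by simp⟩

lemma good_one (hd : 0 < d) : Good d 1 := by simpa using good_iota hd 1

lemma good_C (hd : 0 < d) (r : ℚ) : Good d (RatFunc.C r) := by
  have : RatFunc.C r = ι (Polynomial.C r) := (RatFunc.algebraMap_C r).symm
  rw [this]; exact good_iota hd _

lemma Good.mul' (hd : 0 < d) {x y : F} (hx : Good d x) (hy : Good d y) : Good d (x * y) := by
  obtain ⟨p1, q1, hq1, h1⟩ := hx
  obtain ⟨p2, q2, hq2, h2⟩ := hy
  exact ⟨p1 * p2, q1 * q2, not_dvd_mul hd hq1 hq2, by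
    simp only [map_mul] at h1 h2 ⊢; linear_combination (y * ι q2) * h1 + ι p1 * h2⟩

lemma Good.sub' (hd : 0 < d) {x y : F} (hx : Good d x) (hy : Good d y) : Good d (x - y) := by
  obtain ⟨p1, q1, hq1, h1⟩ := hx
  obtain ⟨p2, q2, hq2, h2⟩ := hy
  exact ⟨p1 * q2 - p2 * q1, q1 * q2, not_dvd_mul hd hq1 hq2, by
    simp only [map_mul, map_sub] at h1 h2 ⊢; linear_combination ι q2 * h1 - ι q1 * h2⟩

lemma good_inv (hd : 0 < d) {p : Polynomial ℚ} (hp : ¬ Phi d ∣ p) : Good d (ι p)⁻¹ := by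
  have hp0 : p ≠ 0 := fun h => hp (h ▸ dvd_zero _)
  have : ι p ≠ 0 := fun h => hp0 (RatFunc.algebraMap_injective ℚ (h.trans (map_zero ι).symm))
  exact ⟨1, p, hp, by simp [inv_mul_cancel₀ this]⟩

lemma good_prod (hd : 0 < d) {α : Type} (s : Finset α) (f : α → F)
    (h : ∀ i ∈ s, Good d (f i)) : Good d (∏ i ∈ s, f i) := by
  classical
  induction s using Finset.induction_on with
  | empty => simpa using good_one hd
  | insert _ _ hni ih =>
    rw [Finset.prod_insert hni]
    exact Good.mul' hd (h _ (Finset.mem_insert_self _ _))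
      (ih fun i hi => h i (Finset.mem_insert_of_mem hi))

lemma Good.of_cong (hd : 0 < d) {x y : F} (hc : Cong d x y) (hy : Good d y) : Good d x := by
  obtain ⟨p1, q1, hq1, h1⟩ := hc
  obtain ⟨p2, q2, hq2, h2⟩ := hy
  exact ⟨Phi d * p1 * q2 + p2 * q1, q1 * q2, not_dvd_mul hd hq1 hq2, by
    simp only [map_mul, map_add] at h1 h2 ⊢; linear_combination ι q2 * h1 + ι q1 * h2⟩

lemma cong_mul (hd : 0 < d) {x x' y y' : F} (h1 : Cong d x x') (h2 : Cong d y y')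
    (hx' : Good d x') (hy : Good d y) : Cong d (x * y) (x' * y') := by
  obtain ⟨p1, q1, hq1, h1⟩ := h1
  obtain ⟨p2, q2, hq2, h2⟩ := h2
  obtain ⟨p3, q3, hq3, h3⟩ := hx'
  obtain ⟨p4, q4, hq4, h4⟩ := hy
  refine ⟨p1 * p4 * q2 * q3 + p2 * p3 * q1 * q4, q1 * q2 * q3 * q4,
    not_dvd_mul hd (not_dvd_mul hd (not_dvd_mul hd hq1 hq2) hq3) hq4, ?_⟩
  simp only [map_mul, map_add] at h1 h2 h3 h4 ⊢
  linear_combination (y * ι q2 * ι q3 * ι q4) * h1 + (x' * ι q1 * ι q3 * ι q4) * h2 +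
    (ι (Phi d) * ι p1 * ι q2 * ι q3) * h4 + (ι (Phi d) * ι p2 * ι q1 * ι q4) * h3

lemma cong_mul_zero (hd : 0 < d) {x y : F} (h1 : Cong d x 0) (hy : Good d y) :
    Cong d (x * y) 0 := by
  obtain ⟨p1, q1, hq1, h1⟩ := h1
  obtain ⟨p2, q2, hq2, h2⟩ := hy
  refine ⟨p1 * p2, q1 * q2, not_dvd_mul hd hq1 hq2, ?_⟩
  simp only [map_mul] at h1 h2 ⊢
  linear_combination (y * ι q2) * h1 + (ι (Phi d) * ι p1) * h2

lemma cong_neg {x y : F} (h : Cong d x y) : Cong d (-x) (-y) := by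
  obtain ⟨p, q, hq, h⟩ := h
  exact ⟨-p, q, hq, by simp only [map_mul, map_neg] at h ⊢; linear_combination -h⟩

lemma cong_one_sub {x y : F} (h : Cong d x y) : Cong d (1 - x) (1 - y) := by
  obtain ⟨p, q, hq, h⟩ := h
  exact ⟨-p, q, hq, by simp only [map_mul, map_neg] at h ⊢; linear_combination -h⟩

lemma cong_prod (hd : 0 < d) {α : Type} (s : Finset α) (f h : α → F)
    (hc : ∀ i ∈ s, Cong d (f i) (h i)) (hg : ∀ i ∈ s, Good d (h i)) :
    Cong d (∏ i ∈ s, f i) (∏ i ∈ s, h i) := by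
  classical
  induction s using Finset.induction_on with
  | empty => simpa using cong_refl hd 1
  | @insert a s hni ih =>
    rw [Finset.prod_insert hni, Finset.prod_insert hni]
    have hrest := ih (fun i hi => hc i (Finset.mem_insert_of_mem hi))
      (fun i hi => hg i (Finset.mem_insert_of_mem hi))
    refine cong_mul hd (hc _ (Finset.mem_insert_self _ _)) hrest
      (hg _ (Finset.mem_insert_self _ _)) ?_
    exact Good.of_cong hd hrest (good_prod hd _ _ fun i hi => hg i (Finset.mem_insert_of_mem hi))


lemma good_neg {x : F} (h : Good d x) : Good d (-x) := by
  obtain ⟨p, q, hq, h⟩ := h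
  exact ⟨-p, q, hq, by rw [map_neg, neg_mul, h]⟩

def zeta (d : ℕ) : ℂ := Complex.exp (2 * Real.pi * Complex.I / d)

lemma hzeta (hd : 0 < d) : IsPrimitiveRoot (zeta d) d := Complex.isPrimitiveRoot_exp d hd.ne'

lemma phi_dvd_iff (hd : 0 < d) (q : Polynomial ℚ) :
    Phi d ∣ q ↔ aeval (zeta d) q = 0 := by
  have h1 : Phi d = minpoly ℚ (zeta d) := cyclotomic_eq_minpoly_rat (hzeta hd) hd
  constructor
  · rintro ⟨c, rfl⟩
    rw [map_mul, h1, minpoly.aeval, zero_mul]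
  · intro h; rw [h1]; exact minpoly.dvd ℚ _ h

lemma not_dvd_of_aeval (hd : 0 < d) {q : Polynomial ℚ} (h : aeval (zeta d) q ≠ 0) :
    ¬ Phi d ∣ q := by rw [phi_dvd_iff hd]; exact h

lemma phi_dvd_X_pow_sub_one (hd : 0 < d) {k : ℕ} (h : d ∣ k) :
    Phi d ∣ (X ^ k - 1 : Polynomial ℚ) := by
  obtain ⟨k', rfl⟩ := h
  have h1 : Phi d ∣ (X ^ d - 1 : Polynomial ℚ) := by
    rw [← prod_cyclotomic_eq_X_pow_sub_one hd ℚ]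
    exact Finset.dvd_prod_of_mem _ (Nat.mem_divisors_self d hd.ne')
  refine h1.trans ?_
  rw [pow_mul]
  simpa using sub_dvd_pow_sub_pow (X ^ d : Polynomial ℚ) 1 k'

lemma X_zpow_natCast (k : ℕ) : (RatFunc.X : F) ^ (k : ℤ) = ι (X ^ k) := by
  rw [zpow_natCast, map_pow, show (ι X : F) = RatFunc.X from RatFunc.algebraMap_X]

lemma not_dvd_X_pow (hd : 0 < d) (n : ℕ) : ¬ Phi d ∣ (X ^ n : Polynomial ℚ) :=
  not_dvd_of_aeval hd (by
    simp only [map_pow, aeval_X]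
    exact pow_ne_zero _ ((hzeta hd).ne_zero hd.ne'))

lemma good_zpow (hd : 0 < d) (e : ℤ) : Good d ((RatFunc.X : F) ^ e) := by
  rcases le_or_gt 0 e with h | h
  · lift e to ℕ using h
    rw [X_zpow_natCast]; exact good_iota hd _
  · have h1 : e = -(((-e).toNat : ℕ) : ℤ) := by omega
    rw [h1, zpow_neg, X_zpow_natCast]
    exact good_inv hd (not_dvd_X_pow hd _)

lemma cong_X_zpow_one (hd : 0 < d) (n : ℤ) : Cong d ((RatFunc.X : F) ^ ((d : ℤ) * n)) 1 := by
  rcases le_or_gt 0 n with h | h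
  · have h1 : (d : ℤ) * n = ((d * n.toNat : ℕ) : ℤ) := by
      push_cast; rw [Int.toNat_of_nonneg h]
    rw [h1, X_zpow_natCast]
    obtain ⟨w, hw⟩ := phi_dvd_X_pow_sub_one hd (Dvd.intro _ rfl : d ∣ d * n.toNat)
    exact ⟨w, 1, not_dvd_one hd, by rw [map_one, mul_one, ← hw, map_sub, map_one]⟩
  · set k : ℕ := (-((d : ℤ) * n)).toNat with hk
    have hk0 : (k : ℤ) = -((d : ℤ) * n) := by
      rw [hk]
      exact Int.toNat_of_nonneg (by nlinarith [mul_pos (Int.natCast_pos.mpr hd) (neg_pos.mpr h)])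
    have hdk : d ∣ k := by
      have : (d : ℤ) ∣ (k : ℤ) := ⟨-n, by rw [hk0]; ring⟩
      exact_mod_cast this
    obtain ⟨w, hw⟩ := phi_dvd_X_pow_sub_one hd hdk
    refine ⟨-w, X ^ k, not_dvd_X_pow hd k, ?_⟩
    have e1 : (RatFunc.X : F) ^ ((d : ℤ) * n) * ι (X ^ k) = 1 := by
      rw [← X_zpow_natCast, ← zpow_add₀ RatFunc.X_ne_zero,
        show (d : ℤ) * n + (k : ℤ) = 0 by rw [hk0]; ring, zpow_zero]
    have e2 : ι (X ^ k) - 1 = ι (Phi d) * ι w := by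
      rw [← map_mul, ← hw, map_sub, map_one]
    simp only [map_mul, map_neg]
    linear_combination e1 - e2

lemma cong_zpow_zpow (hd : 0 < d) {e e' : ℤ} (h : (d : ℤ) ∣ e - e') :
    Cong d ((RatFunc.X : F) ^ e) ((RatFunc.X : F) ^ e') := by
  obtain ⟨n, hn⟩ := h
  obtain ⟨p1, q1, hq1, h1⟩ := cong_X_zpow_one hd n
  obtain ⟨p2, q2, hq2, h2⟩ := good_zpow hd e'
  refine ⟨p1 * p2, q1 * q2, not_dvd_mul hd hq1 hq2, ?_⟩
  have hx : (RatFunc.X : F) ^ e = (RatFunc.X : F) ^ e' * (RatFunc.X : F) ^ ((d : ℤ) * n) := by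
    rw [← zpow_add₀ RatFunc.X_ne_zero]; congr 1; linarith
  simp only [map_mul] at h1 h2 ⊢
  rw [hx]
  linear_combination ((RatFunc.X : F) ^ e' * ι q2) * h1 + (ι (Phi d) * ι p1) * h2

lemma cong_one_sub_zpow_zero (hd : 0 < d) {e : ℤ} (h : (d : ℤ) ∣ e) :
    Cong d (1 - (RatFunc.X : F) ^ e) 0 := by
  have h1 := cong_zpow_zpow hd (e' := 0) (by simpa using h)
  have h2 := cong_one_sub h1
  simpa using h2

lemma cong_sing_nat (hd : 0 < d) (a B : ℕ) (hB : 0 < B) :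
    Cong d ((1 - (RatFunc.X : F) ^ ((d : ℤ) * a)) / (1 - (RatFunc.X : F) ^ ((d : ℤ) * B)))
      (RatFunc.C ((a : ℚ) / (B : ℚ))) := by
  set g : ℕ → Polynomial ℚ := fun n => ∑ i ∈ range n, ((X : Polynomial ℚ) ^ d) ^ i with hgdef
  have hgeom : ∀ n : ℕ, (X : Polynomial ℚ) ^ (d * n) - 1 = (X ^ d - 1) * g n := fun n => by
    rw [pow_mul, ← geom_sum_mul]; ring
  have hsum : ∀ n : ℕ, (X ^ d - 1 : Polynomial ℚ) ∣ (g n - (n : Polynomial ℚ)) := fun n => by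
    have : g n - (n : Polynomial ℚ) = ∑ i ∈ range n, (((X : Polynomial ℚ) ^ d) ^ i - 1) := by
      rw [Finset.sum_sub_distrib]; simp [hgdef]
    rw [this]
    exact Finset.dvd_sum fun i _ => by simpa using sub_dvd_pow_sub_pow ((X : Polynomial ℚ) ^ d) 1 i
  have hdvd2 : (X ^ d - 1 : Polynomial ℚ) ∣ ((a : Polynomial ℚ) * g B - (B : Polynomial ℚ) * g a) := by
    have heq : (a : Polynomial ℚ) * g B - (B : Polynomial ℚ) * g a
        = (a : Polynomial ℚ) * (g B - B) - (B : Polynomial ℚ) * (g a - a) := by ring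
    rw [heq]; exact dvd_sub ((hsum B).mul_left _) ((hsum a).mul_left _)
  obtain ⟨h0, hh0⟩ := hdvd2
  obtain ⟨W, hW⟩ := phi_dvd_X_pow_sub_one hd (dvd_refl d)
  have hBQ : (B : ℚ) ≠ 0 := Nat.cast_ne_zero.mpr hB.ne'
  have hu : (1 - (RatFunc.X : F) ^ ((d : ℤ) * a)) = ι (1 - X ^ (d * a)) := by
    rw [show ((d : ℤ) * a) = ((d * a : ℕ) : ℤ) by push_cast; ring, X_zpow_natCast, map_sub, map_one]
  have hv : (1 - (RatFunc.X : F) ^ ((d : ℤ) * B)) = ι (1 - X ^ (d * B)) := by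
    rw [show ((d : ℤ) * B) = ((d * B : ℕ) : ℤ) by push_cast; ring, X_zpow_natCast, map_sub, map_one]
  have hvpoly : (1 - X ^ (d * B) : Polynomial ℚ) ≠ 0 := by
    intro hcon
    have h2 := congrArg (Polynomial.eval 0) hcon
    have hdB : d * B ≠ 0 := by positivity
    simp [zero_pow hdB] at h2
  have hv0 : ι (1 - X ^ (d * B)) ≠ 0 :=
    fun h => hvpoly (RatFunc.algebraMap_injective ℚ (h.trans (map_zero ι).symm))
  have hCB : Polynomial.C ((a : ℚ) / B) * (B : Polynomial ℚ) = (a : Polynomial ℚ) := by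
    rw [← Polynomial.C_eq_natCast, ← Polynomial.C_eq_natCast, ← C_mul, div_mul_cancel₀ _ hBQ]
  refine ⟨-(W * h0), (B : Polynomial ℚ) * g B, ?_, ?_⟩
  · apply not_dvd_of_aeval hd
    have hzd : (zeta d) ^ d = 1 := (hzeta hd).pow_eq_one
    simp [hgdef, hzd, hBQ]
    omega
  · rw [hu, hv, show RatFunc.C ((a : ℚ) / (B : ℚ)) = ι (Polynomial.C ((a : ℚ) / B)) from
      (RatFunc.algebraMap_C _).symm]
    rw [sub_mul, div_mul_eq_mul_div, sub_eq_iff_eq_add, div_eq_iff hv0]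
    simp only [← map_mul, ← map_add]
    refine congrArg ι ?_
    linear_combination (-(B : Polynomial ℚ) * g B) * (hgeom a)
      + (-(Phi d * W * h0) + Polynomial.C ((a : ℚ) / B) * B * g B) * (hgeom B)
      + ((X ^ d - 1 : Polynomial ℚ) * (g B) ^ 2) * hCB
      + ((X ^ d - 1 : Polynomial ℚ) * g B) * hh0
      + ((X ^ d - 1 : Polynomial ℚ) * h0 * g B) * hW

lemma cong_sing (hd : 0 < d) (A : ℤ) (B : ℕ) (hB : 0 < B) :
    Cong d ((1 - (RatFunc.X : F) ^ ((d : ℤ) * A)) / (1 - (RatFunc.X : F) ^ ((d : ℤ) * B)))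
      (RatFunc.C ((A : ℚ) / (B : ℚ))) := by
  rcases le_or_gt 0 A with h | h
  · have h2 := cong_sing_nat hd A.toNat B hB
    rw [show ((A.toNat : ℕ) : ℤ) = A from Int.toNat_of_nonneg h] at h2
    rw [show ((A.toNat : ℕ) : ℚ) = (A : ℚ) by exact_mod_cast congrArg (Int.cast : ℤ → ℚ) (Int.toNat_of_nonneg h)] at h2
    exact h2
  · set a : ℕ := (-A).toNat with ha
    have haA : (a : ℤ) = -A := Int.toNat_of_nonneg (by omega)
    have key : (1 - (RatFunc.X : F) ^ ((d : ℤ) * A))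
        = (-(RatFunc.X : F) ^ ((d : ℤ) * A)) * (1 - (RatFunc.X : F) ^ ((d : ℤ) * a)) := by
      rw [mul_sub, mul_one, neg_mul, ← zpow_add₀ RatFunc.X_ne_zero,
        show (d : ℤ) * A + (d : ℤ) * a = 0 by rw [haA]; ring, zpow_zero]
      ring
    rw [key, mul_div_assoc]
    have hc1 : Cong d (-(RatFunc.X : F) ^ ((d : ℤ) * A)) (-1) := by
      refine cong_neg ?_
      have := cong_zpow_zpow hd (e := (d : ℤ) * A) (e' := 0) (by simp)
      simpa using this
    have hc2 := cong_sing_nat hd a B hB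
    have hg2 : Good d ((1 - (RatFunc.X : F) ^ ((d : ℤ) * a)) / (1 - (RatFunc.X : F) ^ ((d : ℤ) * B))) :=
      Good.of_cong hd hc2 (good_C hd _)
    have hres := cong_mul hd hc1 hc2 (by simpa using good_neg (good_one hd)) hg2
    have hfin : (-1 : F) * RatFunc.C ((a : ℚ) / B) = RatFunc.C ((A : ℚ) / B) := by
      rw [neg_one_mul, ← map_neg]
      congr 1
      rw [show ((a : ℕ) : ℚ) = -(A : ℚ) by exact_mod_cast congrArg (Int.cast : ℤ → ℚ) haA]
      ring
    rwa [hfin] at hres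


lemma iota_ne_zero (hd : 0 < d) {p : Polynomial ℚ} (hp : ¬ Phi d ∣ p) : ι p ≠ 0 := by
  have hp0 : p ≠ 0 := fun h => hp (h ▸ dvd_zero _)
  exact fun h => hp0 (RatFunc.algebraMap_injective ℚ (h.trans (map_zero ι).symm))

lemma aeval_one_sub_X_pow_ne (hd : 0 < d) {k : ℕ} (h : ¬ d ∣ k) :
    aeval (zeta d) (1 - (X : Polynomial ℚ) ^ k) ≠ 0 := by
  simp only [map_sub, map_one, map_pow, aeval_X, sub_ne_zero]
  intro hcon
  exact h (((hzeta hd).pow_eq_one_iff_dvd k).mp hcon.symm)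

def Wp (d : ℕ) : Polynomial ℚ := ∏ c ∈ (range d).erase 0, (1 - (X : Polynomial ℚ) ^ c)

lemma not_dvd_Wp (hd : 0 < d) : ¬ Phi d ∣ Wp d := by
  apply not_dvd_of_aeval hd
  rw [Wp, map_prod]
  apply Finset.prod_ne_zero_iff.mpr
  intro c hc
  obtain ⟨hc0, hcd⟩ := Finset.mem_erase.mp hc
  have hcd' := Finset.mem_range.mp hcd
  apply aeval_one_sub_X_pow_ne hd
  intro hcon
  exact absurd (Nat.le_of_dvd (Nat.pos_of_ne_zero hc0) hcon) (by omega)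

lemma cong_factor (hd : 0 < d) (e : ℤ) :
    Cong d (1 - (RatFunc.X : F) ^ e) (ι (1 - X ^ ((e % (d : ℤ)).toNat))) := by
  have h1 : ι (1 - X ^ ((e % (d : ℤ)).toNat)) = 1 - (RatFunc.X : F) ^ (((e % (d : ℤ)).toNat : ℤ)) := by
    rw [map_sub, map_one, X_zpow_natCast]
  rw [h1]
  refine cong_one_sub (cong_zpow_zpow hd ?_)
  have h2 : (((e % (d : ℤ)).toNat : ℤ)) = e % (d : ℤ) :=
    Int.toNat_of_nonneg (Int.emod_nonneg _ (by exact_mod_cast hd.ne'))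
  rw [h2]
  exact ⟨e / d, by linarith [Int.mul_ediv_add_emod e (d : ℤ)]⟩

lemma cong_div_one (hd : 0 < d) {x : F} {P Q : Polynomial ℚ}
    (hx : Cong d x (ι P)) (hQc : Cong d (ι Q) (ι P)) (hQd : ¬ Phi d ∣ Q) :
    Cong d (x / ι Q) 1 := by
  have hxy : Cong d x (ι Q) := Cong.trans' hd hx hQc.symm'
  obtain ⟨p1, q1, hq1, h1⟩ := hxy
  have hQ0 : ι Q ≠ 0 := iota_ne_zero hd hQd
  refine ⟨p1, q1 * Q, not_dvd_mul hd hq1 hQd, ?_⟩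
  rw [map_mul]
  have hstep : (x / ι Q - 1) * (ι q1 * ι Q) = (x - ι Q) * ι q1 := by
    field_simp
  rw [hstep, h1]

section Main

variable {r : ℤ} {m : ℕ}

lemma dvd_char (hd : 0 < d) (hcop : Nat.Coprime m d) (E : ℕ → ℤ)
    (hE : ∀ i i' : ℕ, E i - E i' = ((i : ℤ) - (i' : ℤ)) * m)
    (i0 : ℕ) (hi0 : i0 < d) (h0 : (d : ℤ) ∣ E i0) :
    ∀ i < d, ((d : ℤ) ∣ E i ↔ i = i0) := by
  have hco : IsCoprime (d : ℤ) (m : ℤ) := Nat.isCoprime_iff_coprime.mpr hcop.symm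
  intro i hi
  constructor
  · intro hdi
    have h1 : (d : ℤ) ∣ E i - E i0 := dvd_sub hdi h0
    rw [hE] at h1
    have h2 : (d : ℤ) ∣ (i : ℤ) - i0 := hco.dvd_of_dvd_mul_right h1
    have h3 : (i : ℤ) - i0 = 0 := Int.eq_zero_of_abs_lt_dvd h2 (by rw [abs_lt]; constructor <;> omega)
    omega
  · rintro rfl; exact h0

lemma prod_reindex (hd : 0 < d) (hcop : Nat.Coprime m d) (E : ℕ → ℤ)
    (hE : ∀ i i' : ℕ, E i - E i' = ((i : ℤ) - (i' : ℤ)) * m)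
    (i0 : ℕ) (hi0 : i0 < d) (h0 : (d : ℤ) ∣ E i0) :
    ∏ i ∈ (range d).erase i0, (1 - (X : Polynomial ℚ) ^ ((E i % (d : ℤ)).toNat)) = Wp d := by
  have hchar := dvd_char hd hcop E hE i0 hi0 h0
  set f : ℕ → ℕ := fun i => (E i % (d : ℤ)).toNat with hf
  have hd0 : (d : ℤ) ≠ 0 := by exact_mod_cast hd.ne'
  have hfd : ∀ i, f i < d := by
    intro i
    have h1 : 0 ≤ E i % d := Int.emod_nonneg _ hd0
    have h2 : E i % d < d := Int.emod_lt_of_pos _ (by exact_mod_cast hd)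
    simp only [hf]; omega
  have hmodiff : ∀ i i', f i = f i' → (d : ℤ) ∣ E i - E i' := by
    intro i i' hfe
    have h1 : 0 ≤ E i % d := Int.emod_nonneg _ hd0
    have h1' : 0 ≤ E i' % d := Int.emod_nonneg _ hd0
    have hmod : E i % d = E i' % d := by simp only [hf] at hfe; omega
    have h2 : (d:ℤ) ∣ E i' - E i := Int.ModEq.dvd hmod
    exact dvd_sub_comm.mp h2
  have hco : IsCoprime (d : ℤ) (m : ℤ) := Nat.isCoprime_iff_coprime.mpr hcop.symm
  have hinj : ∀ i ∈ (range d).erase i0, ∀ i' ∈ (range d).erase i0, f i = f i' → i = i' := by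
    intro i hi i' hi' hfe
    have hiR := Finset.mem_range.mp (Finset.mem_of_mem_erase hi)
    have hiR' := Finset.mem_range.mp (Finset.mem_of_mem_erase hi')
    have h1 := hmodiff i i' hfe
    rw [hE] at h1
    have h2 : (d : ℤ) ∣ (i : ℤ) - i' := hco.dvd_of_dvd_mul_right h1
    have h3 : (i : ℤ) - i' = 0 := Int.eq_zero_of_abs_lt_dvd h2 (by rw [abs_lt]; constructor <;> omega)
    omega
  have himage : Finset.image f ((range d).erase i0) = (range d).erase 0 := by
    apply Finset.eq_of_subset_of_card_le
    · intro x hx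
      obtain ⟨i, hi, rfl⟩ := Finset.mem_image.mp hx
      obtain ⟨hine, hiR⟩ := Finset.mem_erase.mp hi
      have hiR' := Finset.mem_range.mp hiR
      refine Finset.mem_erase.mpr ⟨?_, Finset.mem_range.mpr (hfd i)⟩
      intro hfi0
      have h1 : 0 ≤ E i % d := Int.emod_nonneg _ hd0
      have h2 : E i % d = 0 := by simp only [hf] at hfi0; omega
      have h3 : (d : ℤ) ∣ E i := Int.dvd_of_emod_eq_zero h2
      exact hine ((hchar i hiR').mp h3)
    · have hc1 : ((range d).erase 0).card = d - 1 := by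
        rw [Finset.card_erase_of_mem (Finset.mem_range.mpr hd), Finset.card_range]
      have hc2 : ((range d).erase i0).card = d - 1 := by
        rw [Finset.card_erase_of_mem (Finset.mem_range.mpr hi0), Finset.card_range]
      rw [hc1, Finset.card_image_of_injOn (fun x hx y hy h => hinj x hx y hy h), hc2]
  calc ∏ i ∈ (range d).erase i0, (1 - (X : Polynomial ℚ) ^ (f i))
      = ∏ x ∈ Finset.image f ((range d).erase i0), (1 - (X : Polynomial ℚ) ^ x) :=
        (Finset.prod_image (f := fun x => (1 : Polynomial ℚ) - X ^ x) hinj).symm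
    _ = Wp d := by rw [himage]; rfl


lemma cong_block (hm : 0 < m) (hd : 0 < d) (hcop : Nat.Coprime m d)
    (lam : ℕ) (hlam : lam < d) (c : ℤ) (hc : r + lam * m = d * c)
    (t : ℕ) (ht : t ≤ d - 1) (s : ℕ) :
    Cong d ((∏ i ∈ range d, (1 - (RatFunc.X : F) ^ (r + ((s * d + t + i : ℕ) : ℤ) * m)))
        / ∏ i ∈ range d, (1 - (RatFunc.X : F) ^ ((m : ℤ) * (((s * d + t + i : ℕ) : ℤ) + 1))))
      (RatFunc.C (((c : ℚ) + ((s + (if lam < t then 1 else 0) : ℕ) : ℚ) * (m : ℚ))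
        / ((m : ℚ) * ((s : ℚ) + 1)))) := by
  have htd : t < d := by omega
  set e : ℕ := if lam < t then 1 else 0 with he
  set i0 : ℕ := if lam < t then lam + d - t else lam - t with hi0
  have hi0d : i0 < d := by rw [hi0]; split_ifs <;> omega
  set i1 : ℕ := d - 1 - t with hi1
  have hi1d : i1 < d := by omega
  have hkey : t + i0 = lam + e * d := by rw [hi0, he]; split_ifs <;> omega
  have h6 : s * d + t + i1 + 1 = d * (s + 1) := by
    have h7 : t + i1 + 1 = d := by omega
    calc s * d + t + i1 + 1 = s * d + (t + i1 + 1) := by ring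
      _ = s * d + d := by rw [h7]
      _ = d * (s + 1) := by ring
  have hNat : m * (s * d + t + i1 + 1) = d * (m * (s + 1)) := by rw [h6]; ring
  have h8 : s * d + t + i0 = s * d + (lam + e * d) := by
    calc s * d + t + i0 = s * d + (t + i0) := by ring
      _ = _ := by rw [hkey]
  have hEi0 : r + ((s * d + t + i0 : ℕ) : ℤ) * m = (d : ℤ) * (c + (s + e) * m) := by
    rw [h8]; push_cast; linear_combination hc
  have charD := dvd_char hd hcop (fun i => ((m * (s * d + t + i + 1) : ℕ) : ℤ))
      (fun i i' => by push_cast; ring) i1 hi1d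
      ⟨(m * (s + 1) : ℤ), by push_cast [hNat]; ring⟩
  have hdenfac : ∀ j : ℕ, (1 - (RatFunc.X : F) ^ ((m : ℤ) * ((j : ℤ) + 1)))
      = ι (1 - X ^ (m * (j + 1))) := fun j => by
    rw [show ((m : ℤ) * ((j : ℤ) + 1)) = ((m * (j + 1) : ℕ) : ℤ) by push_cast; ring,
      X_zpow_natCast, map_sub, map_one]
  simp only [hdenfac]
  rw [← Finset.mul_prod_erase (range d) _ (Finset.mem_range.mpr hi0d),
      ← Finset.mul_prod_erase (range d) _ (Finset.mem_range.mpr hi1d),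
      ← div_mul_div_comm, ← map_prod]
  have hfirst : Cong d ((1 - (RatFunc.X : F) ^ (r + ((s * d + t + i0 : ℕ) : ℤ) * m))
      / ι (1 - X ^ (m * (s * d + t + i1 + 1))))
      (RatFunc.C (((c + (s + e) * m : ℤ) : ℚ) / ((m * (s + 1) : ℕ) : ℚ))) := by
    have hv' : ι (1 - X ^ (m * (s * d + t + i1 + 1)))
        = 1 - (RatFunc.X : F) ^ ((d : ℤ) * ((m * (s + 1) : ℕ) : ℤ)) := by
      rw [hNat, show (d : ℤ) * ((m * (s + 1) : ℕ) : ℤ) = ((d * (m * (s + 1)) : ℕ) : ℤ) by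
        push_cast; ring, X_zpow_natCast, map_sub, map_one]
    rw [hv', hEi0]
    exact cong_sing hd (c + (s + e) * m) (m * (s + 1)) (by positivity)
  have hN : Cong d (∏ i ∈ (range d).erase i0,
      (1 - (RatFunc.X : F) ^ (r + ((s * d + t + i : ℕ) : ℤ) * m))) (ι (Wp d)) := by
    have h10 := cong_prod hd ((range d).erase i0)
        (fun i => 1 - (RatFunc.X : F) ^ (r + ((s * d + t + i : ℕ) : ℤ) * m))
        (fun i => ι (1 - X ^ (((r + ((s * d + t + i : ℕ) : ℤ) * m) % (d : ℤ)).toNat)))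
        (fun i _ => cong_factor hd _) (fun i _ => good_iota hd _)
    have h11 : (∏ i ∈ (range d).erase i0,
        ι (1 - X ^ (((r + ((s * d + t + i : ℕ) : ℤ) * m) % (d : ℤ)).toNat))) = ι (Wp d) := by
      rw [← map_prod]
      exact congrArg ι (prod_reindex hd hcop _ (fun i i' => by push_cast; ring) i0 hi0d
        ⟨_, hEi0⟩)
    rwa [h11] at h10
  have hD : Cong d (ι (∏ i ∈ (range d).erase i1, (1 - X ^ (m * (s * d + t + i + 1)))))
      (ι (Wp d)) := by
    rw [map_prod]
    have h10 := cong_prod hd ((range d).erase i1)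
        (fun i => ι (1 - X ^ (m * (s * d + t + i + 1))))
        (fun i => ι (1 - X ^ ((((m * (s * d + t + i + 1) : ℕ) : ℤ) % (d : ℤ)).toNat)))
        (fun i _ => by
          show Cong d (ι (1 - X ^ (m * (s * d + t + i + 1))))
            (ι (1 - X ^ ((((m * (s * d + t + i + 1) : ℕ) : ℤ) % (d : ℤ)).toNat)))
          rw [show ι (1 - X ^ (m * (s * d + t + i + 1)))
              = 1 - (RatFunc.X : F) ^ (((m * (s * d + t + i + 1) : ℕ) : ℤ)) from by
            rw [X_zpow_natCast, map_sub, map_one]]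
          exact cong_factor hd _)
        (fun i _ => good_iota hd _)
    have h11 : (∏ i ∈ (range d).erase i1,
        ι (1 - X ^ ((((m * (s * d + t + i + 1) : ℕ) : ℤ) % (d : ℤ)).toNat))) = ι (Wp d) := by
      rw [← map_prod]
      exact congrArg ι (prod_reindex hd hcop _ (fun i i' => by push_cast; ring) i1 hi1d
        ⟨(m * (s + 1) : ℤ), by push_cast [hNat]; ring⟩)
    rwa [h11] at h10
  have hQd : ¬ Phi d ∣ ∏ i ∈ (range d).erase i1, (1 - X ^ (m * (s * d + t + i + 1))) := by
    apply not_dvd_of_aeval hd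
    rw [map_prod]
    apply Finset.prod_ne_zero_iff.mpr
    intro i hi
    obtain ⟨hine, hiR⟩ := Finset.mem_erase.mp hi
    have hiR' := Finset.mem_range.mp hiR
    apply aeval_one_sub_X_pow_ne hd
    intro hcon
    exact hine ((charD i hiR').mp (Int.natCast_dvd_natCast.mpr hcon))
  have hnon := cong_div_one hd hN hD hQd
  have hfin := cong_mul hd hfirst hnon (good_C hd _) (Good.of_cong hd hnon (good_one hd))
  rw [mul_one] at hfin
  have hcc : (((c + (s + e) * m : ℤ) : ℚ) / ((m * (s + 1) : ℕ) : ℚ))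
      = ((c : ℚ) + ((s + e : ℕ) : ℚ) * (m : ℚ)) / ((m : ℚ) * ((s : ℚ) + 1)) := by
    push_cast; ring
  rwa [hcc] at hfin


lemma den_fac (m : ℕ) (j : ℕ) : (1 - (RatFunc.X : F) ^ ((m : ℤ) * ((j : ℤ) + 1)))
    = ι (1 - X ^ (m * (j + 1))) := by
  rw [show ((m : ℤ) * ((j : ℤ) + 1)) = ((m * (j + 1) : ℕ) : ℤ) by push_cast; ring,
    X_zpow_natCast, map_sub, map_one]

lemma good_numdiv (hm : 0 < m) (hd : 0 < d) (hcop : Nat.Coprime m d) {t : ℕ} (htd : t < d)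
    (S : Finset ℕ) :
    Good d ((∏ j ∈ S, (1 - (RatFunc.X : F) ^ (r + (j : ℤ) * m)))
      / ∏ j ∈ range t, (1 - (RatFunc.X : F) ^ ((m : ℤ) * ((j : ℤ) + 1)))) := by
  rw [div_eq_mul_inv]
  refine Good.mul' hd (good_prod hd _ _ fun j _ => Good.sub' hd (good_one hd) (good_zpow hd _)) ?_
  simp only [den_fac m]
  rw [← map_prod]
  apply good_inv hd
  apply not_dvd_of_aeval hd
  rw [map_prod]
  apply Finset.prod_ne_zero_iff.mpr
  intro j hj
  apply aeval_one_sub_X_pow_ne hd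
  intro hcon
  have h2 : d ∣ j + 1 := Nat.Coprime.dvd_of_dvd_mul_left hcop.symm hcon
  have h3 := Nat.le_of_dvd (Nat.succ_pos j) h2
  have h4 := Finset.mem_range.mp hj
  omega

lemma master (hm : 0 < m) (hd : 0 < d) (hcop : Nat.Coprime m d)
    (lam : ℕ) (hlam : lam < d) (c : ℤ) (hc : r + lam * m = d * c)
    (t : ℕ) (ht : t ≤ d - 1) (s : ℕ) :
    Cong d ((∏ j ∈ range (s * d + t), (1 - (RatFunc.X : F) ^ (r + (j : ℤ) * m)))
        / ∏ j ∈ range (s * d + t), (1 - (RatFunc.X : F) ^ ((m : ℤ) * ((j : ℤ) + 1))))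
      (RatFunc.C (∏ k ∈ range s,
          (((c : ℚ) / m + k + ((if lam < t then 1 else 0 : ℕ) : ℚ)) / ((k : ℚ) + 1)))
        * ((∏ j ∈ range t, (1 - (RatFunc.X : F) ^ (r + (j : ℤ) * m)))
          / ∏ j ∈ range t, (1 - (RatFunc.X : F) ^ ((m : ℤ) * ((j : ℤ) + 1))))) := by
  induction s with
  | zero =>
    simp only [Nat.zero_mul, Nat.zero_add, prod_range_zero, map_one, one_mul]
    exact cong_refl hd _
  | succ s ih =>
    have hsplitN : (∏ j ∈ range ((s + 1) * d + t), (1 - (RatFunc.X : F) ^ (r + (j : ℤ) * m)))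
        = (∏ j ∈ range (s * d + t), (1 - (RatFunc.X : F) ^ (r + (j : ℤ) * m)))
          * ∏ i ∈ range d, (1 - (RatFunc.X : F) ^ (r + ((s * d + t + i : ℕ) : ℤ) * m)) := by
      rw [show (s + 1) * d + t = (s * d + t) + d by ring, Finset.prod_range_add]
    have hsplitD : (∏ j ∈ range ((s + 1) * d + t),
          (1 - (RatFunc.X : F) ^ ((m : ℤ) * ((j : ℤ) + 1))))
        = (∏ j ∈ range (s * d + t), (1 - (RatFunc.X : F) ^ ((m : ℤ) * ((j : ℤ) + 1))))
          * ∏ i ∈ range d, (1 - (RatFunc.X : F) ^ ((m : ℤ) * (((s * d + t + i : ℕ) : ℤ) + 1))) := by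
      rw [show (s + 1) * d + t = (s * d + t) + d by ring, Finset.prod_range_add]
    rw [hsplitN, hsplitD, ← div_mul_div_comm]
    have hblock := cong_block hm hd hcop lam hlam c hc t ht s
    have hgoodE0 : Good d ((∏ j ∈ range t, (1 - (RatFunc.X : F) ^ (r + (j : ℤ) * m)))
        / ∏ j ∈ range t, (1 - (RatFunc.X : F) ^ ((m : ℤ) * ((j : ℤ) + 1)))) :=
      good_numdiv hm hd hcop (by omega) _
    have hstep := cong_mul hd ih hblock (Good.mul' hd (good_C hd _) hgoodE0)
      (Good.of_cong hd hblock (good_C hd _))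
    refine Cong.trans' hd hstep (cong_of_eq hd ?_)
    have hm0 : (m : ℚ) ≠ 0 := by positivity
    have hconst : (((c : ℚ) + ((s + (if lam < t then 1 else 0) : ℕ) : ℚ) * (m : ℚ))
          / ((m : ℚ) * ((s : ℚ) + 1)))
        = (((c : ℚ) / m + s + ((if lam < t then 1 else 0 : ℕ) : ℚ)) / ((s : ℚ) + 1)) := by
      push_cast
      split_ifs <;> (field_simp; try ring)
    rw [Finset.prod_range_succ, map_mul, hconst]
    ring

end Main

theorem qLucas_congr_cyclotomic' (r : ℤ) (m d : ℕ) (hm : 0 < m) (hd : 0 < d)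
    (hcop : Nat.Coprime m d) (lam : ℕ) (hlam : lam < d)
    (hdvd : (d : ℤ) ∣ r + lam * m) (s t : ℕ) (ht : t ≤ d - 1) :
    Cong d ((∏ j ∈ Finset.range (s * d + t), (1 - (RatFunc.X : RatFunc ℚ) ^ (r + (j : ℤ) * m)))
          / (∏ j ∈ Finset.range (s * d + t), (1 - (RatFunc.X : RatFunc ℚ) ^ ((m : ℤ) * (j + 1)))))
        (RatFunc.C ((∏ i ∈ Finset.range s, (((r : ℚ) + lam * m) / (m * d) + i))
              / (Nat.factorial s : ℚ))
            * ((∏ j ∈ Finset.range t, (1 - (RatFunc.X : RatFunc ℚ) ^ (r + (j : ℤ) * m)))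
              / (∏ j ∈ Finset.range t, (1 - (RatFunc.X : RatFunc ℚ) ^ ((m : ℤ) * (j + 1)))))) := by
  obtain ⟨c, hc⟩ := hdvd
  have hM := master (r := r) (m := m) hm hd hcop lam hlam c hc t ht s
  have hm0 : (m : ℚ) ≠ 0 := by positivity
  have hd0 : (d : ℚ) ≠ 0 := by positivity
  have hcm : ((r : ℚ) + lam * m) / (m * d) = (c : ℚ) / m := by
    have h1 : ((r : ℚ) + lam * m) = (d : ℚ) * c := by exact_mod_cast congrArg (fun z : ℤ => (z : ℚ)) hc
    rw [h1]
    field_simp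
  by_cases hlt : lam < t
  · have hE0 : Cong d ((∏ j ∈ range t, (1 - (RatFunc.X : F) ^ (r + (j : ℤ) * m)))
        / ∏ j ∈ range t, (1 - (RatFunc.X : F) ^ ((m : ℤ) * ((j : ℤ) + 1)))) 0 := by
      rw [← Finset.mul_prod_erase (range t) _ (Finset.mem_range.mpr hlt), mul_div_assoc]
      refine cong_mul_zero hd ?_ (good_numdiv hm hd hcop (by omega) _)
      exact cong_one_sub_zpow_zero hd ⟨c, hc⟩
    have hz : ∀ q : ℚ, Cong d (RatFunc.C q
        * ((∏ j ∈ range t, (1 - (RatFunc.X : F) ^ (r + (j : ℤ) * m)))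
          / ∏ j ∈ range t, (1 - (RatFunc.X : F) ^ ((m : ℤ) * ((j : ℤ) + 1))))) 0 := fun q => by
      rw [mul_comm]
      exact cong_mul_zero hd hE0 (good_C hd _)
    exact Cong.trans' hd (Cong.trans' hd hM (hz _)) (hz _).symm'
  · have hGs : (∏ k ∈ range s,
        (((c : ℚ) / m + k + ((if lam < t then 1 else 0 : ℕ) : ℚ)) / ((k : ℚ) + 1)))
        = (∏ i ∈ range s, (((r : ℚ) + lam * m) / (m * d) + i)) / (Nat.factorial s : ℚ) := by
      rw [Finset.prod_div_distrib]
      congr 1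
      · apply Finset.prod_congr rfl
        intro k _
        rw [if_neg hlt, hcm]
        push_cast
        ring
      · rw [← Finset.prod_range_add_one_eq_factorial, Nat.cast_prod]
        apply Finset.prod_congr rfl
        intro k _
        push_cast
        ring
    rw [← hGs]
    exact hM

end QLucas


end

theorem qLucas_congr_cyclotomic (r : ℤ) (m d : ℕ) (hm : 0 < m) (hd : 0 < d)
    (hcop : Nat.Coprime m d) (lam : ℕ) (hlam : lam < d)
    (hdvd : (d : ℤ) ∣ r + lam * m) (s t : ℕ) (ht : t ≤ d - 1) :
    ∃ a b : Polynomial ℚ, ¬ Polynomial.cyclotomic d ℚ ∣ b ∧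
      ((∏ j ∈ Finset.range (s * d + t), (1 - (RatFunc.X : RatFunc ℚ) ^ (r + (j : ℤ) * m)))
          / (∏ j ∈ Finset.range (s * d + t), (1 - (RatFunc.X : RatFunc ℚ) ^ ((m : ℤ) * (j + 1))))
        - RatFunc.C ((∏ i ∈ Finset.range s, (((r : ℚ) + lam * m) / (m * d) + i))
              / (Nat.factorial s : ℚ))
            * ((∏ j ∈ Finset.range t, (1 - (RatFunc.X : RatFunc ℚ) ^ (r + (j : ℤ) * m)))
              / (∏ j ∈ Finset.range t, (1 - (RatFunc.X : RatFunc ℚ) ^ ((m : ℤ) * (j + 1))))))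
          * algebraMap (Polynomial ℚ) (RatFunc ℚ) b
        = algebraMap (Polynomial ℚ) (RatFunc ℚ) (Polynomial.cyclotomic d ℚ * a) := by
  
  obtain ⟨p, q, hq, heq⟩ := QLucas.qLucas_congr_cyclotomic' r m d hm hd hcop lam hlam hdvd s t ht
  exact ⟨p, q, hq, heq⟩
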